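/- arXiv:0809.0298 — 2 statements merged into one kernel-verified Lean document; each statement's English description precedes it below -/
import Mathlib

section
/- (Bernshteĭn's second theorem for two polynomials in two variables, as used in the paper.) Let f and g be nonzero polynomials in ℂ[x,y]. If Trop(f) ∩ Trop(g) = ∅, then the system f = g = 0 has no solutions at infinity: for every (u,v) ∈ ℤ² \ {(0,0)} there is no point (x,y) ∈ (ℂ*)² with in_{(u,v)}(f)(x,y) = 0 and in_{(u,v)}(g)(x,y) = 0. -/
open MvPolynomial

/-- The minimal weighted degree `m_{(u,v)}(f) = min { i*u + j*v : (i,j) ∈ supp(f) }`. -/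
noncomputable def wdeg (u v : ℤ) (f : MvPolynomial (Fin 2) ℂ) : ℤ :=
  sInf ((fun a : Fin 2 →₀ ℕ => (a 0 : ℤ) * u + (a 1 : ℤ) * v) '' ↑f.support)

/-- The initial form `in_{(u,v)}(f)`: the sum of the terms of `f` whose exponent
vector attains the minimal weighted degree. -/
noncomputable def initForm (u v : ℤ) (f : MvPolynomial (Fin 2) ℂ) :
    MvPolynomial (Fin 2) ℂ :=
  ∑ a ∈ f.support.filter (fun a => (a 0 : ℤ) * u + (a 1 : ℤ) * v = wdeg u v f),
    monomial a (f.coeff a)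

/-- The tropicalization `Trop(f)`: nonzero integer vectors `(u,v)` such that the
initial form `in_{(u,v)}(f)` has at least two monomials. -/
def trop (f : MvPolynomial (Fin 2) ℂ) : Set (ℤ × ℤ) :=
  { uv | uv ≠ (0, 0) ∧ 2 ≤ (initForm uv.1 uv.2 f).support.card }

lemma coeff_initForm (u v : ℤ) (f : MvPolynomial (Fin 2) ℂ) (b : Fin 2 →₀ ℕ) :
    coeff b (initForm u v f) =
      if b ∈ f.support.filter (fun a => (a 0 : ℤ) * u + (a 1 : ℤ) * v = wdeg u v f)
      then f.coeff b else 0 := by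
  rw [initForm, coeff_sum]
  simp only [coeff_monomial]
  rw [Finset.sum_ite_eq']

lemma support_initForm (u v : ℤ) (f : MvPolynomial (Fin 2) ℂ) :
    (initForm u v f).support =
      f.support.filter (fun a => (a 0 : ℤ) * u + (a 1 : ℤ) * v = wdeg u v f) := by
  ext b
  rw [mem_support_iff, coeff_initForm]
  split_ifs with h
  · simp only [h, iff_true]
    exact mem_support_iff.mp (Finset.mem_filter.mp h).1
  · simp [h]

lemma initForm_support_nonempty (u v : ℤ) (f : MvPolynomial (Fin 2) ℂ) (hf : f ≠ 0) :
    (initForm u v f).support.Nonempty := by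
  rw [support_initForm]
  have hne : ((fun a : Fin 2 →₀ ℕ => (a 0 : ℤ) * u + (a 1 : ℤ) * v) '' ↑f.support).Nonempty := by
    obtain ⟨a, ha⟩ := (support_nonempty.mpr hf)
    exact ⟨_, ⟨a, ha, rfl⟩⟩
  have hfin : ((fun a : Fin 2 →₀ ℕ => (a 0 : ℤ) * u + (a 1 : ℤ) * v) '' ↑f.support).Finite :=
    (f.support.finite_toSet).image _
  have := Int.csInf_mem hne (by
    obtain ⟨L, hL⟩ := hfin.bddBelow
    exact ⟨L, hL⟩)
  obtain ⟨a, ha, hwa⟩ := this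
  exact ⟨a, Finset.mem_filter.mpr ⟨ha, hwa⟩⟩

lemma eval_initForm_ne_zero (u v : ℤ) (f : MvPolynomial (Fin 2) ℂ) (hf : f ≠ 0)
    (hcard : (initForm u v f).support.card < 2) (x y : ℂ) (hx : x ≠ 0) (hy : y ≠ 0) :
    eval ![x, y] (initForm u v f) ≠ 0 := by
  obtain ⟨a, ha⟩ := initForm_support_nonempty u v f hf
  have h1 : (initForm u v f).support = {a} := by
    apply Finset.eq_singleton_iff_unique_mem.mpr
    refine ⟨ha, fun b hb => ?_⟩
    by_contra hba
    have : 2 ≤ (initForm u v f).support.card := by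
      have := Finset.one_lt_card_iff.mpr ⟨b, a, hb, ha, hba⟩
      omega
    omega
  have h2 : initForm u v f = monomial a (coeff a (initForm u v f)) := by
    ext b
    rw [coeff_monomial]
    split_ifs with h
    · rw [h]
    · have : b ∉ (initForm u v f).support := by
        rw [h1]; simp [Ne.symm h]
      simpa using this
  rw [h2, eval_monomial]
  apply mul_ne_zero
  · have := ha
    rw [mem_support_iff] at this
    exact this
  · rw [Finsupp.prod]
    apply Finset.prod_ne_zero_iff.mpr
    intro i _
    apply pow_ne_zero
    fin_cases i <;> simpa

/-- Bernshteĭn's second theorem for two polynomials in two variables: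
if the tropicalizations are disjoint, then for no nonzero direction `(u,v)` do the
initial forms of `f` and `g` have a common zero in the torus `(ℂ*)²`. -/
theorem no_solutions_at_infinity (f g : MvPolynomial (Fin 2) ℂ) (hf : f ≠ 0) (hg : g ≠ 0)
    (htrop : trop f ∩ trop g = ∅) :
    ∀ u v : ℤ, (u, v) ≠ (0, 0) → ∀ x y : ℂ, x ≠ 0 → y ≠ 0 →
      ¬ (eval ![x, y] (initForm u v f) = 0 ∧ eval ![x, y] (initForm u v g) = 0) := by
  intro u v huv x y hx hy ⟨h1, h2⟩
  have : (u, v) ∉ trop f ∩ trop g := by rw [htrop]; exact Set.notMem_empty _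
  rw [Set.mem_inter_iff] at this
  rcases not_and_or.mp this with h | h
  · have hc : (initForm u v f).support.card < 2 := by
      by_contra hc
      exact h ⟨huv, le_of_not_gt hc⟩
    exact eval_initForm_ne_zero u v f hf hc x y hx hy h1
  · have hc : (initForm u v g).support.card < 2 := by
      by_contra hc
      exact h ⟨huv, le_of_not_gt hc⟩
    exact eval_initForm_ne_zero u v g hg hc x y hx hy h2
end

section
/- Let f be a nonzero polynomial in ℂ[x,y] and (u,v) ∈ ℤ² \ {(0,0)}. Then the initial form in_{(u,v)}(f) has a zero in the torus (ℂ*)² if and only if supp(in_{(u,v)}(f)) contains at least two points, i.e. if and only if (u,v) ∈ Trop(f). -/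
open MvPolynomial

/-- A one-variable polynomial over ℂ with at least two terms has a nonzero root. -/
lemma one_var_root {p : Polynomial ℂ} (hp : 2 ≤ p.support.card) :
    ∃ z : ℂ, z ≠ 0 ∧ p.eval z = 0 := by
  have hp0 : p ≠ 0 := by rintro rfl; simp at hp
  have hlt : p.natTrailingDegree < p.natDegree := by
    rw [Polynomial.natTrailingDegree_eq_support_min' hp0,
      Polynomial.natDegree_eq_support_max' hp0]
    exact Finset.min'_lt_max'_of_card _ hp
  set k := p.natTrailingDegree with hk
  obtain ⟨q, hq⟩ : (Polynomial.X : Polynomial ℂ) ^ k ∣ p :=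
    Polynomial.X_pow_dvd_iff.mpr fun d hd =>
      Polynomial.coeff_eq_zero_of_lt_natTrailingDegree hd
  have hq0 : q ≠ 0 := by rintro rfl; rw [mul_zero] at hq; exact hp0 hq
  have hqc : q.coeff 0 ≠ 0 := by
    have h1 : p.coeff k = q.coeff 0 := by
      have := Polynomial.coeff_X_pow_mul q k 0
      rw [zero_add] at this; rw [hq]; exact this
    have h2 : p.coeff k ≠ 0 :=
      Polynomial.trailingCoeff_nonzero_iff_nonzero.mpr hp0
    rw [h1] at h2; exact h2
  have hdq : q.natDegree ≠ 0 := by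
    have : p.natDegree = k + q.natDegree := by
      rw [hq, Polynomial.natDegree_mul (pow_ne_zero k Polynomial.X_ne_zero) hq0, Polynomial.natDegree_X_pow]
    omega
  obtain ⟨z, hz⟩ := Complex.isAlgClosed.exists_root q (by
    rw [Polynomial.degree_eq_natDegree hq0]
    exact_mod_cast hdq)
  refine ⟨z, ?_, ?_⟩
  · rintro rfl
    rw [Polynomial.IsRoot, ← Polynomial.coeff_zero_eq_eval_zero] at hz
    exact hqc hz
  · rw [hq, Polynomial.eval_mul, hz.eq_zero, mul_zero]

/-- Conversion of a polynomial in one (mv-)variable to a univariate polynomial. -/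
noncomputable def toUni (c : MvPolynomial (Fin 1) ℂ) : Polynomial ℂ :=
  (MvPolynomial.finSuccEquiv ℂ 0 c).map (MvPolynomial.eval (![] : Fin 0 → ℂ))

lemma eval_toUni (c : MvPolynomial (Fin 1) ℂ) (y : ℂ) :
    eval ![y] c = (toUni c).eval y := by
  have h := MvPolynomial.eval_eq_eval_mv_eval' (![] : Fin 0 → ℂ) y c
  have h2 : (![y] : Fin 1 → ℂ) = Fin.cons y ![] := by
    funext i; fin_cases i <;> rfl
  rw [h2, h]; rfl

lemma toUni_coeff (c : MvPolynomial (Fin 1) ℂ) (i : ℕ) :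
    (toUni c).coeff i = c.coeff (Finsupp.cons i 0) := by
  rw [toUni, Polynomial.coeff_map]
  have h := MvPolynomial.finSuccEquiv_coeff_coeff (0 : Fin 0 →₀ ℕ) c i
  rw [← h]
  obtain ⟨r, hr⟩ := MvPolynomial.C_surjective (σ := Fin 0)
    ((MvPolynomial.finSuccEquiv ℂ 0 c).coeff i)
  rw [← hr]
  simp

lemma cons_eval0 (a : Fin 1 →₀ ℕ) : Finsupp.cons (a 0) (0 : Fin 0 →₀ ℕ) = a := by
  have := Finsupp.cons_tail a
  rwa [Subsingleton.elim (Finsupp.tail a) 0] at this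

lemma toUni_support_card (c : MvPolynomial (Fin 1) ℂ) :
    c.support.card ≤ (toUni c).support.card :=
  Finset.card_le_card_of_injOn (fun a => a 0)
    (fun a ha => by
      show a 0 ∈ (toUni c).support
      rw [Polynomial.mem_support_iff, toUni_coeff, cons_eval0 a]
      exact MvPolynomial.mem_support_iff.mp (Finset.mem_coe.mp ha))
    (fun a _ b _ h => by rw [← cons_eval0 a, ← cons_eval0 b]; simp_all)

lemma fin1_root {c : MvPolynomial (Fin 1) ℂ} (hc : 2 ≤ c.support.card) :
    ∃ y : ℂ, y ≠ 0 ∧ eval ![y] c = 0 := by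
  obtain ⟨z, hz0, hz⟩ := one_var_root (le_trans hc (toUni_support_card c))
  exact ⟨z, hz0, by rw [eval_toUni]; exact hz⟩

lemma fin1_zeros_finite {c : MvPolynomial (Fin 1) ℂ} (hc : c ≠ 0) :
    {y : ℂ | eval ![y] c = 0}.Finite := by
  have h : toUni c ≠ 0 := by
    intro h
    apply hc
    have h2 := toUni_support_card c
    rw [h] at h2
    simp only [Polynomial.support_zero, Finset.card_empty] at h2
    exact MvPolynomial.support_eq_empty.mp (Finset.card_eq_zero.mp (Nat.le_zero.mp h2))
  exact (Polynomial.finite_setOf_isRoot h).subset fun y hy => by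
    simp only [Set.mem_setOf_eq] at hy ⊢
    rw [Polynomial.IsRoot, ← eval_toUni]; exact hy

lemma two_var_eval (g : MvPolynomial (Fin 2) ℂ) (x y : ℂ) :
    eval ![x, y] g =
      Polynomial.eval x ((MvPolynomial.finSuccEquiv ℂ 1 g).map (eval ![y])) := by
  have h := MvPolynomial.eval_eq_eval_mv_eval' (![y] : Fin 1 → ℂ) x g
  have h2 : (![x, y] : Fin 2 → ℂ) = Fin.cons x ![y] := by
    funext i; fin_cases i <;> rfl
  rw [h2, h]

lemma two_var_root {g : MvPolynomial (Fin 2) ℂ} (hg : 2 ≤ g.support.card) :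
    ∃ x y : ℂ, x ≠ 0 ∧ y ≠ 0 ∧ eval ![x, y] g = 0 := by
  set P := MvPolynomial.finSuccEquiv ℂ 1 g with hP
  by_cases hcard : 2 ≤ P.support.card
  · -- at least two coefficients in the x-direction: specialize y generically
    set bad : Set ℂ :=
      {0} ∪ ⋃ i ∈ (P.support : Set ℕ), {y : ℂ | eval ![y] (P.coeff i) = 0} with hbad
    have hfin : bad.Finite := by
      refine (Set.finite_singleton 0).union ?_
      refine Set.Finite.biUnion (P.support.finite_toSet) fun i hi => ?_
      exact fin1_zeros_finite (Polynomial.mem_support_iff.mp hi)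
    obtain ⟨y0, hy0⟩ := hfin.infinite_compl.nonempty
    have hy00 : y0 ≠ 0 := fun h => hy0 (Or.inl h)
    have hkey : ∀ i ∈ P.support, eval ![y0] (P.coeff i) ≠ 0 := by
      intro i hi h
      exact hy0 (Or.inr (Set.mem_biUnion hi h))
    set p := P.map (eval ![y0]) with hp
    have hsub : P.support ⊆ p.support := by
      intro i hi
      rw [Polynomial.mem_support_iff, hp, Polynomial.coeff_map]
      exact hkey i hi
    obtain ⟨x0, hx0, hx⟩ := one_var_root (le_trans hcard (Finset.card_le_card hsub))
    exact ⟨x0, y0, hx0, hy00, by rw [two_var_eval]; exact hx⟩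
  · -- only one coefficient in the x-direction; it has ≥ 2 monomials
    have hg0 : g ≠ 0 := fun h => by simp [h] at hg
    have hP0 : P ≠ 0 := fun h => hg0 ((MvPolynomial.finSuccEquiv ℂ 1).map_eq_zero_iff.mp h)
    have h1 : P.support.card = 1 := by
      have := Finset.card_pos.mpr (Polynomial.support_nonempty.mpr hP0)
      omega
    obtain ⟨i0, hi0⟩ := Finset.card_eq_one.mp h1
    have hcons : ∀ a ∈ g.support, a 0 = i0 ∧ Finsupp.tail a ∈ (P.coeff i0).support := by
      intro a ha
      have hmem : Finsupp.tail a ∈ (P.coeff (a 0)).support := by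
        rw [MvPolynomial.mem_support_coeff_finSuccEquiv, Finsupp.cons_tail]
        exact ha
      have hne : P.coeff (a 0) ≠ 0 := fun h => by
        rw [h] at hmem; simp at hmem
      have : a 0 ∈ P.support := Polynomial.mem_support_iff.mpr hne
      rw [hi0, Finset.mem_singleton] at this
      subst this
      exact ⟨rfl, hmem⟩
    have hc2 : 2 ≤ (P.coeff i0).support.card := by
      refine le_trans hg ?_
      refine Finset.card_le_card_of_injOn Finsupp.tail
        (fun a ha => (hcons a ha).2) ?_
      intro a ha b hb h
      rw [← Finsupp.cons_tail a, ← Finsupp.cons_tail b, (hcons a ha).1, (hcons b hb).1, h]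
    obtain ⟨y0, hy00, hy0⟩ := fin1_root hc2
    refine ⟨1, y0, one_ne_zero, hy00, ?_⟩
    rw [two_var_eval]
    have : P.map (eval ![y0]) = 0 := by
      ext j
      rw [Polynomial.coeff_map, Polynomial.coeff_zero]
      by_cases hj : j = i0
      · rw [hj]; exact hy0
      · have : P.coeff j = 0 := by
          by_contra h
          have := Polynomial.mem_support_iff.mpr h
          rw [hi0, Finset.mem_singleton] at this
          exact hj this
        rw [this, map_zero]
    rw [this, Polynomial.eval_zero]

lemma torus_zero_iff_two_le {g : MvPolynomial (Fin 2) ℂ} (hg : g ≠ 0) :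
    (∃ x y : ℂ, x ≠ 0 ∧ y ≠ 0 ∧ eval ![x, y] g = 0) ↔ 2 ≤ g.support.card := by
  constructor
  · rintro ⟨x, y, hx, hy, hxy⟩
    by_contra h
    push_neg at h
    have h1 : g.support.card = 1 := by
      have := Finset.card_pos.mpr (MvPolynomial.support_nonempty.mpr hg)
      omega
    obtain ⟨a, ha⟩ := Finset.card_eq_one.mp h1
    have hmono : g = monomial a (coeff a g) := by
      conv_lhs => rw [g.as_sum]
      rw [ha, Finset.sum_singleton]
    rw [hmono, MvPolynomial.eval_monomial] at hxy
    have hca : coeff a g ≠ 0 := by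
      apply MvPolynomial.mem_support_iff.mp
      rw [ha]; exact Finset.mem_singleton_self a
    refine hca ?_
    have hprod : (Finsupp.prod a fun n e => (![x, y] : Fin 2 → ℂ) n ^ e) ≠ 0 := by
      rw [Finsupp.prod]
      refine Finset.prod_ne_zero_iff.mpr fun i hi => ?_
      refine pow_ne_zero _ ?_
      fin_cases i
      · exact hx
      · exact hy
    exact (mul_eq_zero.mp hxy).resolve_right hprod
  · exact two_var_root

lemma initForm_ne_zero (u v : ℤ) {f : MvPolynomial (Fin 2) ℂ} (hf : f ≠ 0) :
    initForm u v f ≠ 0 := by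
  obtain ⟨m, hm, hw⟩ : ∃ a ∈ f.support, (a 0 : ℤ) * u + (a 1 : ℤ) * v = wdeg u v f := by
    have hne : ((fun a : Fin 2 →₀ ℕ => (a 0 : ℤ) * u + (a 1 : ℤ) * v) '' ↑f.support).Nonempty := by
      refine Set.Nonempty.image _ ?_
      exact_mod_cast MvPolynomial.support_nonempty.mpr hf
    have hmem := hne.csInf_mem ((f.support.finite_toSet).image _)
    obtain ⟨a, ha, h⟩ := hmem
    exact ⟨a, ha, h⟩
  intro h0
  have hc : (initForm u v f).coeff m = f.coeff m := by
    unfold initForm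
    rw [MvPolynomial.coeff_sum]
    simp only [MvPolynomial.coeff_monomial]
    rw [Finset.sum_ite_eq' _ m (fun b => f.coeff b)]
    rw [if_pos (Finset.mem_filter.mpr ⟨hm, hw⟩)]
  rw [h0, MvPolynomial.coeff_zero] at hc
  exact MvPolynomial.mem_support_iff.mp hm hc.symm

/-- The initial form `in_{(u,v)}(f)` has a zero in the torus `(ℂ*)²` if and only if
its support has at least two points, i.e. iff `(u,v) ∈ Trop(f)`. -/
theorem initForm_torus_zero_iff (f : MvPolynomial (Fin 2) ℂ) (hf : f ≠ 0)
    (u v : ℤ) (huv : (u, v) ≠ (0, 0)) :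
    (∃ x y : ℂ, x ≠ 0 ∧ y ≠ 0 ∧ eval ![x, y] (initForm u v f) = 0) ↔
      2 ≤ (initForm u v f).support.card := by
  exact torus_zero_iff_two_le (initForm_ne_zero u v hf)
end
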